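/- Fix a norm ‖·‖ on R² and let ℵ₀ = {v ∈ R_+² : ‖v‖ = 1}. Let h : (0,∞) → (0,∞) be regularly varying with index ρ < 0 and let u : Z_+² → R_+ satisfy: there exists λ₀ > 0 on ℵ₀ with lim_{t→∞} u(⌊t x⌋, ⌊t y⌋)/h(t) = λ₀(x,y) for all (x,y) ∈ ℵ₀. Then u is regularly varying on all of the positive quadrant: for all x,y > 0, lim_{n→∞} u(⌊n x⌋, ⌊n y⌋)/h(n) = λ(x,y) := λ₀((x,y)/‖(x,y)‖) · ‖(x,y)‖^ρ > 0. -/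

import Mathlib

open Filter Topology

/-- convergence on the unit sphere implies regular variation on
the whole positive quadrant.  Here `N` is an arbitrary norm on `ℝ²` (a
seminorm which vanishes only at `0`), `ℵ₀ = {v ∈ ℝ₊² : N v = 1}`. -/
theorem stmt_10
    (N : Seminorm ℝ (ℝ × ℝ)) (hN : ∀ v : ℝ × ℝ, N v = 0 → v = 0)
    (h : ℝ → ℝ) (hpos : ∀ t : ℝ, 0 < t → 0 < h t)
    (ρ : ℝ) (hρ : ρ < 0)
    (hRV : ∀ x : ℝ, 0 < x →
      Tendsto (fun t : ℝ => h (t * x) / h t) atTop (𝓝 (x ^ ρ)))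
    (u : ℕ → ℕ → ℝ) (hu_nonneg : ∀ i j, 0 ≤ u i j)
    (lam₀ : ℝ → ℝ → ℝ)
    (hlam₀ : ∀ x y : ℝ, 0 ≤ x → 0 ≤ y → N (x, y) = 1 → 0 < lam₀ x y)
    (hlim : ∀ x y : ℝ, 0 ≤ x → 0 ≤ y → N (x, y) = 1 →
      Tendsto (fun t : ℝ => u ⌊t * x⌋₊ ⌊t * y⌋₊ / h t) atTop
        (𝓝 (lam₀ x y))) :
    ∀ x y : ℝ, 0 < x → 0 < y →
      0 < lam₀ (x / N (x, y)) (y / N (x, y)) * (N (x, y) : ℝ) ^ ρ ∧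
      Tendsto (fun n : ℕ => u ⌊(n : ℝ) * x⌋₊ ⌊(n : ℝ) * y⌋₊ / h n) atTop
        (𝓝 (lam₀ (x / N (x, y)) (y / N (x, y)) * (N (x, y) : ℝ) ^ ρ)) := by
  intro x y hx hy
  set r := (N (x, y) : ℝ) with hr
  have hr0 : 0 < r := by
    rcases lt_or_eq_of_le (apply_nonneg N (x, y)) with h' | h'
    · exact h'
    · exfalso
      have := hN _ h'.symm
      rw [Prod.ext_iff] at this
      simp at this
      linarith [this.1]
  have hx' : (0:ℝ) ≤ x / r := by positivity
  have hy' : (0:ℝ) ≤ y / r := by positivity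
  have hN1 : N (x / r, y / r) = 1 := by
    have he : (x / r, y / r) = (r⁻¹) • ((x, y) : ℝ × ℝ) := by
      simp [Prod.smul_mk, smul_eq_mul, div_eq_inv_mul]
    rw [he, map_smul_eq_mul, Real.norm_eq_abs, abs_of_pos (by positivity)]
    field_simp
    exact hr.symm
  have hpos' := hlam₀ _ _ hx' hy' hN1
  have hrpow : 0 < r ^ ρ := Real.rpow_pos_of_pos hr0 ρ
  refine ⟨mul_pos hpos' hrpow, ?_⟩
  have htend : Tendsto (fun n : ℕ => (n : ℝ) * r) atTop atTop :=
    tendsto_natCast_atTop_atTop.atTop_mul_const hr0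
  have h1 : Tendsto (fun n : ℕ => u ⌊(n:ℝ)*x⌋₊ ⌊(n:ℝ)*y⌋₊ / h ((n:ℝ)*r)) atTop
      (𝓝 (lam₀ (x/r) (y/r))) := by
    have := (hlim _ _ hx' hy' hN1).comp htend
    refine this.congr fun n => ?_
    have e1 : (n:ℝ)*r*(x/r) = (n:ℝ)*x := by field_simp
    have e2 : (n:ℝ)*r*(y/r) = (n:ℝ)*y := by field_simp
    simp [Function.comp, e1, e2]
  have h2 : Tendsto (fun n : ℕ => h ((n:ℝ)*r) / h n) atTop (𝓝 (r ^ ρ)) :=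
    (hRV r hr0).comp tendsto_natCast_atTop_atTop
  refine (h1.mul h2).congr' ?_
  filter_upwards [eventually_ge_atTop 1] with n hn
  have hn0 : (0:ℝ) < n := by exact_mod_cast hn
  have hhn : h n ≠ 0 := (hpos _ hn0).ne'
  have hhnr : h ((n:ℝ)*r) ≠ 0 := (hpos _ (by positivity)).ne'
  field_simp
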